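/- Fix β' > 0, D > 0, κ > 0, x ∈ (0,1], and define δ_k as in the recursion δ_k = min( κ/(β'+Dk), (1/2)(x − Σ_{j<k} δ_j) ). Then the partial remainders x_k = x − Σ_{j=1}^k δ_j converge to 0, and there exists c > 0 with x_k ≤ c·2^{−k} for all k. -/

import Mathlib

open MeasureTheory ProbabilityTheory Filter Set
open scoped ENNReal NNReal

noncomputable section

theorem stmt_14 (β D κ x : ℝ) (hβ : 0 < β) (hD : 0 < D) (hκ : 0 < κ)
    (hx : 0 < x) (hx1 : x ≤ 1) (d : ℕ → ℝ)
    (hd : ∀ k : ℕ, 1 ≤ k →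
      d k = min (κ / (β + D * (k : ℝ)))
        ((1 / 2) * (x - ∑ j ∈ Finset.Icc 1 (k - 1), d j))) :
    Tendsto (fun k : ℕ => x - ∑ j ∈ Finset.Icc 1 k, d j) atTop (nhds 0) ∧
    ∃ c > 0, ∀ k : ℕ, x - ∑ j ∈ Finset.Icc 1 k, d j ≤ c / 2 ^ k := by
  set y : ℕ → ℝ := fun k => x - ∑ j ∈ Finset.Icc 1 k, d j with hy
  set a : ℕ → ℝ := fun k => κ / (β + D * (k : ℝ)) with ha
  have hden : ∀ k : ℕ, 0 < β + D * (k : ℝ) := fun k => by positivity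
  have hapos : ∀ k : ℕ, 0 < a k := fun k => div_pos hκ (hden k)
  have hy0 : y 0 = x := by simp [hy]
  have hstep : ∀ n : ℕ, y (n + 1) = y n - min (a (n + 1)) (y n / 2) := by
    intro n
    have hsum : ∑ j ∈ Finset.Icc 1 (n + 1), d j
        = (∑ j ∈ Finset.Icc 1 n, d j) + d (n + 1) :=
      Finset.sum_Icc_succ_top (by omega) d
    have hdn : d (n + 1) = min (a (n + 1)) (y n / 2) := by
      have h := hd (n + 1) (by omega)
      simp only [Nat.add_sub_cancel] at h
      rw [h]
      congr 1
      simp only [hy]; ring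
    simp only [hy, hsum, hdn]
    ring
  have hix : ∀ k : ℕ, x - ∑ j ∈ Finset.Icc 1 k, d j = y k := fun k => rfl
  clear_value y a
  have hypos : ∀ n : ℕ, 0 < y n := by
    intro n
    induction n with
    | zero => simpa [hy0] using hx
    | succ n ih =>
      have h1 : min (a (n + 1)) (y n / 2) ≤ y n / 2 := min_le_right _ _
      have h2 := hstep n
      linarith
  have hmono : ∀ n : ℕ, y (n + 1) ≤ y n := by
    intro n
    have h0 : 0 ≤ min (a (n + 1)) (y n / 2) :=
      le_min (hapos (n + 1)).le (by linarith [hypos n])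
    have h2 := hstep n
    linarith
  have hyx : ∀ n : ℕ, y n ≤ x := by
    intro n
    induction n with
    | zero => simp [hy0]
    | succ n ih => exact (hmono n).trans ih
  obtain ⟨K, hK⟩ : ∃ K : ℕ, y K / 2 ≤ a (K + 1) := by
    by_contra hcon
    push_neg at hcon
    have hrec : ∀ n : ℕ, y n = x - ∑ i ∈ Finset.range n, a (i + 1) := by
      intro n
      induction n with
      | zero => simp [hy0]
      | succ n ih =>
        have hmin : min (a (n + 1)) (y n / 2) = a (n + 1) :=
          min_eq_left (le_of_lt (hcon n))
        rw [hstep n, hmin, ih, Finset.sum_range_succ]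
        ring
    set C : ℝ := κ / (β + D) with hC
    have hCpos : 0 < C := div_pos hκ (by linarith)
    have hcmp : ∀ i : ℕ, C * (1 / ((i : ℝ) + 1)) ≤ a (i + 1) := by
      intro i
      have h1 : (0:ℝ) < (i : ℝ) + 1 := by positivity
      have h2 : β + D * (((i : ℕ) + 1 : ℕ) : ℝ) ≤ (β + D) * ((i : ℝ) + 1) := by
        push_cast
        nlinarith [Nat.cast_nonneg (α := ℝ) i]
      have h3 : κ / ((β + D) * ((i : ℝ) + 1)) ≤ κ / (β + D * (((i : ℕ) + 1 : ℕ) : ℝ)) :=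
        div_le_div_of_nonneg_left hκ.le (hden (i + 1)) h2
      calc C * (1 / ((i : ℝ) + 1)) = κ / ((β + D) * ((i : ℝ) + 1)) := by
            rw [hC]; field_simp
        _ ≤ a (i + 1) := by rw [ha]; exact h3
    have hdiv : Tendsto (fun n => ∑ i ∈ Finset.range n, a (i + 1)) atTop atTop := by
      have h1 : Tendsto (fun n => ∑ i ∈ Finset.range n, (1 / ((i : ℝ) + 1))) atTop atTop :=
        Real.tendsto_sum_range_one_div_nat_succ_atTop
      have h2 : Tendsto (fun n => C * ∑ i ∈ Finset.range n, (1 / ((i : ℝ) + 1)))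
          atTop atTop := h1.const_mul_atTop hCpos
      refine tendsto_atTop_mono (fun n => ?_) h2
      rw [Finset.mul_sum]
      exact Finset.sum_le_sum fun i _ => hcmp i
    obtain ⟨N, hN⟩ := (tendsto_atTop.1 hdiv (x + 1)).exists
    have hr := hrec N
    have hp := hypos N
    linarith
  have hhalf : ∀ n : ℕ, y n / 2 ≤ a (n + 1) →
      y (n + 1) = y n / 2 ∧ y (n + 1) / 2 ≤ a (n + 2) := by
    intro n hn
    have hmin : min (a (n + 1)) (y n / 2) = y n / 2 := min_eq_right hn
    have heq : y (n + 1) = y n / 2 := by rw [hstep n, hmin]; ring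
    refine ⟨heq, ?_⟩
    have h2 : a (n + 1) / 2 ≤ a (n + 2) := by
      have hle : β + D * (((n : ℕ) + 2 : ℕ) : ℝ) ≤ (β + D * (((n : ℕ) + 1 : ℕ) : ℝ)) * 2 := by
        push_cast
        nlinarith [Nat.cast_nonneg (α := ℝ) n]
      have h3 := div_le_div_of_nonneg_left hκ.le (hden (n + 2)) hle
      calc a (n + 1) / 2 = κ / ((β + D * (((n : ℕ) + 1 : ℕ) : ℝ)) * 2) := by
            rw [ha, div_div]
        _ ≤ a (n + 2) := by rw [ha]; exact h3
    rw [heq]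
    linarith
  have hiter : ∀ m : ℕ, y (K + m) = y K / 2 ^ m ∧ y (K + m) / 2 ≤ a (K + m + 1) := by
    intro m
    induction m with
    | zero => simpa using hK
    | succ m ih =>
      obtain ⟨ih1, ih2⟩ := ih
      obtain ⟨h1, h2⟩ := hhalf (K + m) ih2
      refine ⟨?_, ?_⟩
      · rw [show K + (m + 1) = (K + m) + 1 from rfl, h1, ih1, pow_succ]; ring
      · exact h2
  have hub : ∀ k : ℕ, y k ≤ x * 2 ^ K / 2 ^ k := by
    intro k
    rcases le_or_gt k K with hkK | hkK
    · have h1 : y k ≤ x := hyx k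
      have h2 : (2:ℝ) ^ k ≤ 2 ^ K := pow_le_pow_right₀ one_le_two hkK
      rw [le_div_iff₀ (by positivity)]
      exact mul_le_mul h1 h2 (by positivity) hx.le
    · obtain ⟨m, rfl⟩ : ∃ m, k = K + m := ⟨k - K, by omega⟩
      have h1 := (hiter m).1
      have h2 : y K ≤ x := hyx K
      have h3 : x * 2 ^ K / 2 ^ (K + m) = x / 2 ^ m := by
        rw [pow_add]; field_simp
      rw [h1, h3]
      exact div_le_div_of_nonneg_right h2 (by positivity)
  have hupper : Tendsto (fun k : ℕ => x * 2 ^ K / 2 ^ k) atTop (nhds 0) := by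
    have h : Tendsto (fun k : ℕ => (x * 2 ^ K) * (1 / 2 : ℝ) ^ k) atTop
        (nhds ((x * 2 ^ K) * 0)) :=
      tendsto_const_nhds.mul (tendsto_pow_atTop_nhds_zero_of_lt_one (by norm_num) (by norm_num))
    simpa [div_pow, div_eq_mul_inv, inv_pow] using h
  simp only [hix]
  refine ⟨?_, x * 2 ^ K, by positivity, hub⟩
  exact tendsto_of_tendsto_of_tendsto_of_le_of_le tendsto_const_nhds hupper
    (fun k => (hypos k).le) hub
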